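/- Let X, X' be finite nonempty sets with X = X', and q, q' : X → ℤ quality functions satisfying |q(y) − q'(y)| ≤ 1 for all y. Let M, M' be the exponential-mechanism distributions with parameter ε corresponding to q and q' respectively. Then for every y ∈ X, M(y) ≤ exp(ε)·M'(y). -/

import Mathlib

theorem stmt9 {X : Type*} [Fintype X] [Nonempty X] (q q' : X → ℤ) (ε : ℝ)
    (hε : 0 < ε) (hsens : ∀ y : X, |q y - q' y| ≤ 1) :
    ∀ y : X,
      Real.exp (ε * q y / 2) / (∑ x : X, Real.exp (ε * q x / 2)) ≤
        Real.exp ε *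
          (Real.exp (ε * q' y / 2) / (∑ x : X, Real.exp (ε * q' x / 2))) := by
  intro y
  have hS : 0 < ∑ x : X, Real.exp (ε * q x / 2) :=
    Finset.sum_pos (fun x _ => Real.exp_pos _) Finset.univ_nonempty
  have hS' : 0 < ∑ x : X, Real.exp (ε * q' x / 2) :=
    Finset.sum_pos (fun x _ => Real.exp_pos _) Finset.univ_nonempty
  have hnum : Real.exp (ε * q y / 2) ≤ Real.exp (ε / 2) * Real.exp (ε * q' y / 2) := by
    rw [← Real.exp_add]
    apply Real.exp_le_exp.mpr
    have h := (abs_le.mp (hsens y)).2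
    have : (q y : ℝ) ≤ (q' y : ℝ) + 1 := by 
      have h2 : q y ≤ q' y + 1 := by linarith
      exact_mod_cast h2
    nlinarith
  have hden : ∑ x : X, Real.exp (ε * q' x / 2) ≤
      Real.exp (ε / 2) * ∑ x : X, Real.exp (ε * q x / 2) := by
    rw [Finset.mul_sum]
    apply Finset.sum_le_sum
    intro x _
    rw [← Real.exp_add]
    apply Real.exp_le_exp.mpr
    have h := (abs_le.mp (hsens x)).1
    have : (q' x : ℝ) ≤ (q x : ℝ) + 1 := by
      have : q' x ≤ q x + 1 := by linarith [(abs_le.mp (hsens x)).1]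
      exact_mod_cast this
    nlinarith
  rw [div_le_iff₀ hS, ← mul_div_assoc, div_mul_eq_mul_div, le_div_iff₀ hS']
  calc Real.exp (ε * q y / 2) * ∑ x : X, Real.exp (ε * q' x / 2)
      ≤ (Real.exp (ε / 2) * Real.exp (ε * q' y / 2)) *
        (Real.exp (ε / 2) * ∑ x : X, Real.exp (ε * q x / 2)) := by
        apply mul_le_mul hnum hden (le_of_lt hS')
        positivity
    _ = Real.exp ε * Real.exp (ε * q' y / 2) * ∑ x : X, Real.exp (ε * q x / 2) := by
        rw [mul_mul_mul_comm, ← Real.exp_add]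
        ring_nf
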